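/- Define S(n) := Σ_{i=0}^{n−1} ((−1)^{n−i−1}/(2n−2i−1)) · (2n−i)_{2i}/(i!)^2. Then for every positive integer n, (2n+1)^2 · S(n+1) = 3·(6n−1)(6n+1) · S(n). -/

import Mathlib

/-- Shifted factorial `(a)_k = a(a+1)···(a+k-1)`. -/
def shifted (a : ℚ) (k : ℕ) : ℚ := ∏ t ∈ Finset.range k, (a + t)

/-- `S(n)` from the paper. -/
def Sfun (n : ℕ) : ℚ :=
  ∑ i ∈ Finset.range n,
    ((-1 : ℚ)^(n - i - 1) / (2*(n:ℚ) - 2*(i:ℚ) - 1)) *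
      (shifted (2*(n:ℚ) - (i:ℚ)) (2*i) / (Nat.factorial i : ℚ)^2)

/-- Summand with a truncation-free sign. -/
def Faux (n i : ℕ) : ℚ :=
  (-1 : ℚ)^(n+i+1) / (2*(n:ℚ) - 2*(i:ℚ) - 1) *
    (shifted (2*(n:ℚ) - (i:ℚ)) (2*i) / (Nat.factorial i : ℚ)^2)

/-- Polynomial part of the WZ certificate. -/
def Paux (n i : ℚ) : ℚ :=
  3*(i-1)*(2*i-1)*(2*i+1) + n*(56*i^3-108*i^2+16*i+24)
    + n^2*(-264*i^2+228*i+44) + n^3*(432*i-96) - 224*n^4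

/-- WZ certificate. -/
def Gaux (n i : ℕ) : ℚ :=
  (i:ℚ)^2 * Paux (n:ℚ) (i:ℚ) * (-1 : ℚ)^(n+i) *
    shifted (2*(n:ℚ) - (i:ℚ) + 2) (2*(i-1)) /
    ((n:ℚ) * (2*(n:ℚ) - 2*(i:ℚ) + 1) * (2*(n:ℚ) - 2*(i:ℚ) - 1) * (Nat.factorial i : ℚ)^2)

lemma shifted_back (a : ℚ) (k : ℕ) : shifted a (k+1) = shifted a k * (a + (k:ℚ)) :=
  Finset.prod_range_succ _ _

lemma shifted_front (a : ℚ) (k : ℕ) : shifted a (k+1) = a * shifted (a+1) k := by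
  unfold shifted
  rw [Finset.prod_range_succ']
  have h : ∀ x ∈ Finset.range k, (a + ((x+1:ℕ):ℚ)) = ((a+1) + (x:ℚ)) := by
    intro x _; push_cast; ring
  rw [Finset.prod_congr rfl h, Nat.cast_zero, add_zero, mul_comm]

lemma sh1 (a : ℚ) (j : ℕ) : shifted a (2*(j+1)) = a * (a+1) * shifted (a+2) (2*j) := by
  rw [show 2*(j+1) = 2*j+1+1 from by omega, shifted_front, shifted_front,
    show a+1+1 = a+2 from by ring]
  ring

lemma sh2 (a : ℚ) (j : ℕ) :
    shifted a (2*(j+1)) = shifted a (2*j) * (a + 2*(j:ℚ)) * (a + 2*(j:ℚ) + 1) := by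
  rw [show 2*(j+1) = 2*j+1+1 from by omega, shifted_back, shifted_back]
  push_cast
  ring

lemma sh3 (a : ℚ) (j : ℕ) :
    shifted a (2*(j+1)) = a * shifted (a+1) (2*j) * (a + 1 + 2*(j:ℚ)) := by
  rw [show 2*(j+1) = 2*j+1+1 from by omega, shifted_back, shifted_front]
  push_cast
  ring

lemma odd_cast_ne (x : ℤ) (hx : x % 2 = 1) : ((x:ℚ)) ≠ 0 := by
  intro h
  have : x = 0 := by exact_mod_cast h
  omega

set_option maxHeartbeats 1600000 in
lemma L1 (n : ℕ) (hn : 1 ≤ n) (i : ℕ) :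
    (2*(n:ℚ)+1)^2 * Faux (n+1) i - 3*(36*(n:ℚ)^2-1) * Faux n i
      = Gaux n (i+1) - Gaux n i := by
  have hN : ((n:ℚ)) ≠ 0 := by
    exact_mod_cast Nat.cast_ne_zero.mpr (by omega)
  cases i with
  | zero =>
    have hd1 : (2*(n:ℚ) - 1) ≠ 0 := by
      have := odd_cast_ne (2*(n:ℤ) - 1) (by omega); push_cast at this; exact this
    have hd2 : (2*(n:ℚ) + 1) ≠ 0 := by
      have := odd_cast_ne (2*(n:ℤ) + 1) (by omega); push_cast at this; exact this
    have hd3 : (2*(n:ℚ) - 3) ≠ 0 := by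
      have := odd_cast_ne (2*(n:ℤ) - 3) (by omega); push_cast at this; exact this
    have e2 : (-1:ℚ)^(n+1+0+1) = (-1:ℚ)^n := by
      rw [show n+1+0+1 = n+2 from by omega, pow_add]; norm_num
    have e1 : (-1:ℚ)^(n+0+1) = -(-1:ℚ)^n := by
      rw [show n+0+1 = n+1 from by omega, pow_succ]; ring
    have e0 : (-1:ℚ)^(n+(0+1)) = -(-1:ℚ)^n := by
      rw [show n+(0+1) = n+1 from by omega, pow_succ]; ring
    simp only [Faux, Gaux, Paux, e2, e1, e0,
      show (2*0:ℕ) = 0 from rfl, show (2*(0+1-1):ℕ) = 0 from rfl,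
      show (2*(0-1):ℕ) = 0 from rfl, shifted, Finset.range_zero, Finset.prod_empty,
      Nat.factorial_zero, Nat.factorial_one, Nat.cast_zero, Nat.cast_one]
    push_cast
    have c0 : ((-1:ℚ) + (n:ℚ)*2) ≠ 0 := by intro h; apply hd1; linarith
    have c1 : ((1:ℚ) + (n:ℚ)*2) ≠ 0 := by intro h; apply hd2; linarith
    have c2 : ((n:ℚ)*3 - (n:ℚ)^2*8 + (n:ℚ)^3*4) ≠ 0 := by
      rw [show (n:ℚ)*3 - (n:ℚ)^2*8 + (n:ℚ)^3*4 = (n:ℚ)*(2*(n:ℚ)-1)*(2*(n:ℚ)-3) from by ring]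
      exact mul_ne_zero (mul_ne_zero hN hd1) hd3
    have c3 : ((-3:ℚ) + (n:ℚ)*2) ≠ 0 := by intro h; apply hd3; linarith
    ring_nf
    have c4 : ((3:ℚ) - (n:ℚ)*8 + (n:ℚ)^2*4) ≠ 0 := by
      rw [show (3:ℚ) - (n:ℚ)*8 + (n:ℚ)^2*4 = (2*(n:ℚ)-1)*(2*(n:ℚ)-3) from by ring]
      exact mul_ne_zero hd1 hd3
    field_simp [c0, c1, c2, c3, c4]
    ring
  | succ j =>
    have hqne : (Nat.factorial (j+1) : ℚ) ≠ 0 := by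
      exact Nat.cast_ne_zero.mpr (Nat.factorial_ne_zero _)
    have hd1 : (2*(n:ℚ) - 2*(j:ℚ) - 1) ≠ 0 := by
      have := odd_cast_ne (2*(n:ℤ) - 2*(j:ℤ) - 1) (by omega); push_cast at this; exact this
    have hd3 : (2*(n:ℚ) - 2*(j:ℚ) - 3) ≠ 0 := by
      have := odd_cast_ne (2*(n:ℤ) - 2*(j:ℤ) - 3) (by omega); push_cast at this; exact this
    have hd5 : (2*(n:ℚ) - 2*(j:ℚ) - 5) ≠ 0 := by
      have := odd_cast_ne (2*(n:ℤ) - 2*(j:ℤ) - 5) (by omega); push_cast at this; exact this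
    have hj1 : ((j:ℚ) + 1) ≠ 0 := by positivity
    have hj2 : ((j:ℚ) + 2) ≠ 0 := by positivity
    -- sign normalizations
    have s1 : (-1:ℚ)^(n+(j+1)+1) = (-1:ℚ)^(n+j) := by
      rw [show n+(j+1)+1 = (n+j)+2 from by omega, pow_add]; norm_num
    have s2 : (-1:ℚ)^(n+1+(j+1)+1) = -(-1:ℚ)^(n+j) := by
      rw [show n+1+(j+1)+1 = (n+j)+3 from by omega, pow_add]; norm_num
    have s3 : (-1:ℚ)^(n+(j+1+1)) = (-1:ℚ)^(n+j) := by
      rw [show n+(j+1+1) = (n+j)+2 from by omega, pow_add]; norm_num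
    have s4 : (-1:ℚ)^(n+(j+1)) = -(-1:ℚ)^(n+j) := by
      rw [show n+(j+1) = (n+j)+1 from by omega, pow_succ]; ring
    -- shifted expansions
    have E1 : shifted (2*(n:ℚ) - ((j+1:ℕ):ℚ)) (2*(j+1)) = (2*(n:ℚ)-(j:ℚ)-1)*(2*(n:ℚ)-(j:ℚ))*shifted (2*(n:ℚ) - (j:ℚ) + 1) (2*j) := by
      rw [sh1,
        show 2*(n:ℚ) - ((j+1:ℕ):ℚ) + 2 = 2*(n:ℚ) - (j:ℚ) + 1 from by push_cast; ring,
        show 2*(n:ℚ) - ((j+1:ℕ):ℚ) + 1 = 2*(n:ℚ) - (j:ℚ) from by push_cast; ring,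
        show 2*(n:ℚ) - ((j+1:ℕ):ℚ) = 2*(n:ℚ) - (j:ℚ) - 1 from by push_cast; ring]
    have E2 : shifted (2*((n+1:ℕ):ℚ) - ((j+1:ℕ):ℚ)) (2*(j+1))
        = shifted (2*(n:ℚ) - (j:ℚ) + 1) (2*j) * (2*(n:ℚ)+(j:ℚ)+1) * (2*(n:ℚ)+(j:ℚ)+2) := by
      rw [sh2, show 2*((n+1:ℕ):ℚ) - ((j+1:ℕ):ℚ) = 2*(n:ℚ) - (j:ℚ) + 1 from by push_cast; ring]
      ring
    have E3 : shifted (2*(n:ℚ) - ((j+1+1:ℕ):ℚ) + 2) (2*(j+1+1-1))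
        = (2*(n:ℚ)-(j:ℚ))*shifted (2*(n:ℚ) - (j:ℚ) + 1) (2*j)*(2*(n:ℚ)+(j:ℚ)+1) := by
      rw [show (j+1+1-1) = j+1 from by omega, sh3,
        show 2*(n:ℚ) - ((j+1+1:ℕ):ℚ) + 2 = 2*(n:ℚ) - (j:ℚ) from by push_cast; ring]
      rw [show 2*(n:ℚ) - (j:ℚ) + 1 + 2*(j:ℚ) = 2*(n:ℚ)+(j:ℚ)+1 from by ring]
    have E4 : shifted (2*(n:ℚ) - ((j+1:ℕ):ℚ) + 2) (2*(j+1-1)) = shifted (2*(n:ℚ) - (j:ℚ) + 1) (2*j) := by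
      rw [show (j+1-1) = j from by omega,
        show 2*(n:ℚ) - ((j+1:ℕ):ℚ) + 2 = 2*(n:ℚ) - (j:ℚ) + 1 from by push_cast; ring]
    have hfact : (Nat.factorial (j+1+1) : ℚ) = ((j:ℚ)+2) * (Nat.factorial (j+1) : ℚ) := by
      rw [Nat.factorial_succ]; push_cast; ring
    simp only [Faux, Gaux, Paux]
    rw [s1, s2, s3, s4, E1, E2, E3, E4, hfact]
    have k1 : (2*((n:ℚ)+1) - 2*((j:ℚ)+1) - 1) ≠ 0 := by
      intro h; apply hd1; linarith
    have k2 : (2*(n:ℚ) - 2*((j:ℚ)+1) - 1) ≠ 0 := by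
      intro h; apply hd3; linarith
    have k3 : (2*(n:ℚ) - 2*((j:ℚ)+1+1) + 1) ≠ 0 := by
      intro h; apply hd3; linarith
    have k4 : (2*(n:ℚ) - 2*((j:ℚ)+1+1) - 1) ≠ 0 := by
      intro h; apply hd5; linarith
    have k5 : (2*(n:ℚ) - 2*((j:ℚ)+1) + 1) ≠ 0 := by
      intro h; apply hd1; linarith
    push_cast
    have m1 : (2*((n:ℚ)+1-((j:ℚ)+1))-1) ≠ 0 := by intro h; apply hd1; linarith
    have m2 : (2*((n:ℚ)-((j:ℚ)+1))-1) ≠ 0 := by intro h; apply hd3; linarith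
    have m3 : (2*((n:ℚ)-((j:ℚ)+1+1))+1) ≠ 0 := by intro h; apply hd3; linarith
    have m4 : (2*((n:ℚ)-((j:ℚ)+1+1))-1) ≠ 0 := by intro h; apply hd5; linarith
    have m5 : (2*((n:ℚ)-((j:ℚ)+1))+1) ≠ 0 := by intro h; apply hd1; linarith
    field_simp [k1, k2, k3, k4, k5, m1, m2, m3, m4, m5]
    ring

set_option maxHeartbeats 1600000 in
lemma L2 (n : ℕ) (hn : 1 ≤ n) :
    Gaux n (n+1) = -(3*(36*(n:ℚ)^2-1)) * Faux n n := by
  have hN : ((n:ℚ)) ≠ 0 := Nat.cast_ne_zero.mpr (by omega)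
  have h3 : shifted ((n:ℚ)+1) (2*n) = 3 * shifted (n:ℚ) (2*n) := by
    have a1 : shifted (n:ℚ) (2*n+1) = (n:ℚ) * shifted ((n:ℚ)+1) (2*n) := shifted_front _ _
    have a2 : shifted (n:ℚ) (2*n+1) = shifted (n:ℚ) (2*n) * ((n:ℚ) + ((2*n:ℕ):ℚ)) :=
      shifted_back _ _
    apply mul_left_cancel₀ hN
    rw [← a1, a2]
    push_cast
    ring
  have sgn1 : (-1:ℚ)^(n+(n+1)) = -(-1:ℚ)^(2*n) := by
    rw [show n+(n+1) = 2*n+1 from by omega, pow_succ]; ring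
  have sgn0 : (-1:ℚ)^(2*n) = 1 := by
    rw [pow_mul]; norm_num
  have sgn2 : (-1:ℚ)^(n+n+1) = -(1:ℚ) := by
    rw [show n+n+1 = 2*n+1 from by omega, pow_succ, sgn0]; ring
  have E : shifted (2*(n:ℚ) - ((n+1:ℕ):ℚ) + 2) (2*(n+1-1)) = 3 * shifted (n:ℚ) (2*n) := by
    rw [show (n+1-1) = n from by omega,
      show 2*(n:ℚ) - ((n+1:ℕ):ℚ) + 2 = (n:ℚ)+1 from by push_cast; ring, h3]
  have E2 : shifted (2*(n:ℚ) - (n:ℚ)) (2*n) = shifted (n:ℚ) (2*n) := by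
    rw [show 2*(n:ℚ) - (n:ℚ) = (n:ℚ) from by ring]
  have hfact : (Nat.factorial (n+1) : ℚ) = ((n:ℚ)+1) * (Nat.factorial n : ℚ) := by
    rw [Nat.factorial_succ]; push_cast; ring
  have hq : (Nat.factorial n : ℚ) ≠ 0 := Nat.cast_ne_zero.mpr (Nat.factorial_ne_zero _)
  have hn1 : ((n:ℚ) + 1) ≠ 0 := by positivity
  simp only [Gaux, Paux, Faux]
  rw [sgn1, sgn0, sgn2, E, E2, hfact]
  have k1 : (2*(n:ℚ) - 2*((n:ℚ)+1) + 1) ≠ 0 := by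
    intro h; linarith
  have k2 : (2*(n:ℚ) - 2*((n:ℚ)+1) - 1) ≠ 0 := by
    intro h; linarith
  have k3 : (2*(n:ℚ) - 2*(n:ℚ) - 1) ≠ 0 := by norm_num
  push_cast
  field_simp [k1, k2, k3]
  ring

lemma Sfun_eq (m : ℕ) : Sfun m = ∑ i ∈ Finset.range m, Faux m i := by
  unfold Sfun Faux
  apply Finset.sum_congr rfl
  intro i hi
  have hi' : i < m := Finset.mem_range.mp hi
  have hs : (-1:ℚ)^(m - i - 1) = (-1:ℚ)^(m+i+1) := by
    rw [show m + i + 1 = (m - i - 1) + 2*(i+1) from by omega, pow_add, pow_mul]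
    norm_num
  rw [hs]

theorem S_recurrence (n : ℕ) (hn : 1 ≤ n) :
    (2*(n:ℚ) + 1)^2 * Sfun (n+1) = 3 * (6*(n:ℚ) - 1) * (6*(n:ℚ) + 1) * Sfun n := by
  have tel : ∑ i ∈ Finset.range (n+1),
      ((2*(n:ℚ)+1)^2 * Faux (n+1) i - 3*(36*(n:ℚ)^2-1) * Faux n i)
      = Gaux n (n+1) - Gaux n 0 := by
    rw [Finset.sum_congr rfl (fun i _ => L1 n hn i)]
    exact Finset.sum_range_sub (Gaux n) (n+1)
  have hG0 : Gaux n 0 = 0 := by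
    simp [Gaux]
  have hGn : Gaux n (n+1) = -(3*(36*(n:ℚ)^2-1)) * Faux n n := L2 n hn
  have hsplit : ∑ i ∈ Finset.range (n+1),
      ((2*(n:ℚ)+1)^2 * Faux (n+1) i - 3*(36*(n:ℚ)^2-1) * Faux n i)
      = (2*(n:ℚ)+1)^2 * Sfun (n+1)
        - 3*(36*(n:ℚ)^2-1) * (Sfun n + Faux n n) := by
    rw [Finset.sum_sub_distrib, ← Finset.mul_sum, ← Finset.mul_sum, ← Sfun_eq,
      Finset.sum_range_succ, ← Sfun_eq]
  rw [hsplit, hG0, hGn] at tel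
  linear_combination tel
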